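/- Let μ be a finite measure on a measurable space Ω, let ḡ ∈ [0,∞), and let g₀, g : Ω → ℝ be measurable functions with |g₀(ω)| ≤ ḡ and |g(ω)| ≤ ḡ for every ω. Then 0 ≤ ∫_Ω [ (g₀ − g)·e^{g₀} − (e^{g₀} − e^{g}) ] dμ ≤ (e^{2ḡ}/2)·∫_Ω (g₀ − g)² e^{g₀} dμ. -/

import Mathlib

open MeasureTheory intervalIntegral

private lemma exp_taylor_bound (t : ℝ) :
    Real.exp t - 1 - t ≤ t ^ 2 / 2 * Real.exp (max t 0) := by
  rcases le_or_gt 0 t with ht | ht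
  · -- t ≥ 0 : compare ∫ (exp s - 1) with ∫ s * exp t on [0, t]
    have hmax : max t 0 = t := max_eq_left ht
    rw [hmax]
    have h1 : ∫ s in (0:ℝ)..t, (Real.exp s - 1) = Real.exp t - 1 - t := by
      rw [intervalIntegral.integral_sub (intervalIntegrable_exp) intervalIntegrable_const]
      simp [integral_exp, Real.exp_zero]
    have h2 : ∫ s in (0:ℝ)..t, s * Real.exp t = t ^ 2 / 2 * Real.exp t := by
      rw [intervalIntegral.integral_mul_const]
      simp [integral_id]
    rw [← h1, ← h2]
    apply intervalIntegral.integral_mono_on ht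
    · exact (intervalIntegrable_exp).sub intervalIntegrable_const
    · exact (intervalIntegrable_id).mul_const _
    · intro s hs
      have hs0 : 0 ≤ s := hs.1
      have hst : s ≤ t := hs.2
      have h3 : Real.exp s - 1 ≤ s * Real.exp s := by
        have h := mul_le_mul_of_nonneg_right (Real.add_one_le_exp (-s)) (Real.exp_pos s).le
        rw [← Real.exp_add] at h
        simp at h
        nlinarith
      have h4 : s * Real.exp s ≤ s * Real.exp t :=
        mul_le_mul_of_nonneg_left (Real.exp_le_exp.mpr hst) hs0
      linarith
  · -- t < 0 : show exp t - 1 - t ≤ t^2/2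
    have hmax : max t 0 = 0 := max_eq_right ht.le
    rw [hmax, Real.exp_zero, mul_one]
    have h1 : ∫ s in t..(0:ℝ), (Real.exp s - 1) = 1 - Real.exp t + t := by
      rw [intervalIntegral.integral_sub (intervalIntegrable_exp) intervalIntegrable_const]
      simp [integral_exp, Real.exp_zero]
    have h2 : ∫ s in t..(0:ℝ), s = -(t ^ 2 / 2) := by
      simp [integral_id]
      ring
    have hmono : ∫ s in t..(0:ℝ), s ≤ ∫ s in t..(0:ℝ), (Real.exp s - 1) := by
      apply intervalIntegral.integral_mono_on ht.le
      · exact intervalIntegrable_id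
      · exact (intervalIntegrable_exp).sub intervalIntegrable_const
      · intro s _
        linarith [Real.add_one_le_exp s]
    rw [h1, h2] at hmono
    linarith

/-- Lemma A.2 of the supplementary material: for a finite measure `μ` and measurable
`g₀, g` bounded in absolute value by `ḡ`,
`0 ≤ ∫ [(g₀ - g) e^{g₀} - (e^{g₀} - e^g)] dμ ≤ (e^{2ḡ}/2) ∫ (g₀ - g)² e^{g₀} dμ`. -/
theorem stmt_5 {Ω : Type*} [MeasurableSpace Ω] (μ : Measure Ω) [IsFiniteMeasure μ]
    (gbar : ℝ) (hgbar : 0 ≤ gbar) (g₀ g : Ω → ℝ)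
    (hg₀ : Measurable g₀) (hg : Measurable g)
    (hg₀b : ∀ ω, |g₀ ω| ≤ gbar) (hgb : ∀ ω, |g ω| ≤ gbar) :
    0 ≤ ∫ ω, ((g₀ ω - g ω) * Real.exp (g₀ ω) - (Real.exp (g₀ ω) - Real.exp (g ω))) ∂μ ∧
    ∫ ω, ((g₀ ω - g ω) * Real.exp (g₀ ω) - (Real.exp (g₀ ω) - Real.exp (g ω))) ∂μ ≤
      Real.exp (2 * gbar) / 2 * ∫ ω, (g₀ ω - g ω) ^ 2 * Real.exp (g₀ ω) ∂μ := by
  set F : Ω → ℝ := fun ω => (g₀ ω - g ω) * Real.exp (g₀ ω) - (Real.exp (g₀ ω) - Real.exp (g ω))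
    with hF
  set G : Ω → ℝ := fun ω => Real.exp (2 * gbar) / 2 * ((g₀ ω - g ω) ^ 2 * Real.exp (g₀ ω))
    with hG
  -- pointwise nonnegativity
  have hFpos : ∀ ω, 0 ≤ F ω := by
    intro ω
    have h := Real.add_one_le_exp (g ω - g₀ ω)
    have := Real.exp_pos (g₀ ω)
    have hmul : (g ω - g₀ ω + 1) * Real.exp (g₀ ω) ≤ Real.exp (g ω - g₀ ω) * Real.exp (g₀ ω) :=
      mul_le_mul_of_nonneg_right h (Real.exp_pos _).le
    rw [← Real.exp_add] at hmul
    simp only [hF]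
    have : g ω - g₀ ω + g₀ ω = g ω := by ring
    rw [this] at hmul
    nlinarith [Real.exp_pos (g₀ ω)]
  -- pointwise upper bound
  have hFG : ∀ ω, F ω ≤ G ω := by
    intro ω
    have key := exp_taylor_bound (g ω - g₀ ω)
    have hmaxle : max (g ω - g₀ ω) 0 ≤ 2 * gbar := by
      have h₁ := (abs_le.mp (hg₀b ω)).1
      have h₂ := (abs_le.mp (hgb ω)).2
      have : g ω - g₀ ω ≤ 2 * gbar := by linarith
      exact max_le this (by linarith)
    have hexpmax : Real.exp (max (g ω - g₀ ω) 0) ≤ Real.exp (2 * gbar) :=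
      Real.exp_le_exp.mpr hmaxle
    have key2 : Real.exp (g ω - g₀ ω) - 1 - (g ω - g₀ ω) ≤
        (g ω - g₀ ω) ^ 2 / 2 * Real.exp (2 * gbar) := by
      calc Real.exp (g ω - g₀ ω) - 1 - (g ω - g₀ ω)
          ≤ (g ω - g₀ ω) ^ 2 / 2 * Real.exp (max (g ω - g₀ ω) 0) := key
        _ ≤ (g ω - g₀ ω) ^ 2 / 2 * Real.exp (2 * gbar) := by
            apply mul_le_mul_of_nonneg_left hexpmax (by positivity)
    -- multiply by exp (g₀ ω) > 0
    have hmul := mul_le_mul_of_nonneg_right key2 (Real.exp_pos (g₀ ω)).le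
    have hid : (Real.exp (g ω - g₀ ω) - 1 - (g ω - g₀ ω)) * Real.exp (g₀ ω) = F ω := by
      simp only [hF]
      rw [Real.exp_sub]
      field_simp
      ring
    have hid2 : (g ω - g₀ ω) ^ 2 / 2 * Real.exp (2 * gbar) * Real.exp (g₀ ω) = G ω := by
      simp only [hG]; ring_nf
    calc F ω = (Real.exp (g ω - g₀ ω) - 1 - (g ω - g₀ ω)) * Real.exp (g₀ ω) := hid.symm
      _ ≤ (g ω - g₀ ω) ^ 2 / 2 * Real.exp (2 * gbar) * Real.exp (g₀ ω) := hmul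
      _ = G ω := hid2
  -- integrability
  have hFmeas : Measurable F := by
    apply Measurable.sub
    · exact (hg₀.sub hg).mul (Real.measurable_exp.comp hg₀)
    · exact (Real.measurable_exp.comp hg₀).sub (Real.measurable_exp.comp hg)
  have hGmeas : Measurable (fun ω => (g₀ ω - g ω) ^ 2 * Real.exp (g₀ ω)) :=
    ((hg₀.sub hg).pow_const 2).mul (Real.measurable_exp.comp hg₀)
  have hexpbd : ∀ ω, Real.exp (g₀ ω) ≤ Real.exp gbar := fun ω =>
    Real.exp_le_exp.mpr (abs_le.mp (hg₀b ω)).2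
  have hexpbd' : ∀ ω, Real.exp (g ω) ≤ Real.exp gbar := fun ω =>
    Real.exp_le_exp.mpr (abs_le.mp (hgb ω)).2
  have hFint : Integrable F μ := by
    apply Integrable.mono' (integrable_const ((2 * gbar + 2) * Real.exp gbar))
      hFmeas.aestronglyMeasurable
    filter_upwards with ω
    have h1 : |g₀ ω - g ω| ≤ 2 * gbar := by
      calc |g₀ ω - g ω| ≤ |g₀ ω| + |g ω| := abs_sub _ _
        _ ≤ 2 * gbar := by linarith [hg₀b ω, hgb ω]
    rw [Real.norm_eq_abs, abs_of_nonneg (hFpos ω)]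
    simp only [hF]
    have h2 : (g₀ ω - g ω) * Real.exp (g₀ ω) ≤ 2 * gbar * Real.exp gbar := by
      calc (g₀ ω - g ω) * Real.exp (g₀ ω) ≤ |g₀ ω - g ω| * Real.exp (g₀ ω) :=
            mul_le_mul_of_nonneg_right (le_abs_self _) (Real.exp_pos _).le
        _ ≤ 2 * gbar * Real.exp gbar := by
            apply mul_le_mul h1 (hexpbd ω) (Real.exp_pos _).le (by linarith [abs_nonneg (g₀ ω - g ω)])
    have h3 : -(Real.exp (g₀ ω) - Real.exp (g ω)) ≤ 2 * Real.exp gbar := by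
      have := Real.exp_pos (g₀ ω)
      have := hexpbd' ω
      linarith [Real.exp_pos gbar]
    linarith
  have hGint : Integrable (fun ω => (g₀ ω - g ω) ^ 2 * Real.exp (g₀ ω)) μ := by
    apply Integrable.mono' (integrable_const ((2 * gbar) ^ 2 * Real.exp gbar))
      hGmeas.aestronglyMeasurable
    filter_upwards with ω
    have h1 : |g₀ ω - g ω| ≤ 2 * gbar := by
      calc |g₀ ω - g ω| ≤ |g₀ ω| + |g ω| := abs_sub _ _
        _ ≤ 2 * gbar := by linarith [hg₀b ω, hgb ω]
    have h2 : (g₀ ω - g ω) ^ 2 ≤ (2 * gbar) ^ 2 := by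
      rw [← sq_abs]
      apply pow_le_pow_left₀ (abs_nonneg _) h1
    rw [Real.norm_eq_abs, abs_of_nonneg (by positivity)]
    apply mul_le_mul h2 (hexpbd ω) (Real.exp_pos _).le (by positivity)
  constructor
  · exact integral_nonneg hFpos
  · calc ∫ ω, F ω ∂μ ≤ ∫ ω, G ω ∂μ :=
          integral_mono hFint (hGint.const_mul _) hFG
      _ = Real.exp (2 * gbar) / 2 * ∫ ω, (g₀ ω - g ω) ^ 2 * Real.exp (g₀ ω) ∂μ := by
          simp only [hG]
          rw [MeasureTheory.integral_const_mul]
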